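/- If c = 0 and a·b > 0, then the origin is an attracting (asymptotically stable) equilibrium of the Kukles system (K): the origin is Lyapunov stable, and there exists δ > 0 such that every solution γ of (K) with ‖γ(0)‖ < δ is defined for all t ≥ 0 and satisfies γ(t) → (0,0) as t → +∞. -/

import Mathlib

open Filter Set

/-- The Kukles vector field `(−y, x + y(x²+y²−1)(ax+by+c))`. -/
def kuklesField (a b c : ℝ) (p : ℝ × ℝ) : ℝ × ℝ :=
  (-p.2, p.1 + p.2 * (p.1 ^ 2 + p.2 ^ 2 - 1) * (a * p.1 + b * p.2 + c))

/-- Lyapunov function for the Kukles system near the origin. -/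
noncomputable def kV (a b : ℝ) (p : ℝ × ℝ) : ℝ :=
  (p.1 ^ 2 + p.2 ^ 2) / 2
    + (-(2 * b / 3) * p.1 ^ 3 + -b * (p.1 * p.2 ^ 2) + a / 3 * p.2 ^ 3)
    + (-(a * b / 8) * (p.1 ^ 3 * p.2) + -(7 * a * b / 8) * (p.1 * p.2 ^ 3)
        + (a ^ 2 - 2 * b ^ 2) / 4 * p.2 ^ 4)

/-- Derivative of `kV` along the Kukles vector field (with `c = 0`). -/
noncomputable def kVdot (a b : ℝ) (p : ℝ × ℝ) : ℝ :=
  (p.1 + (-2 * b * p.1 ^ 2 + -b * p.2 ^ 2)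
      + (-(3 * a * b / 8) * (p.1 ^ 2 * p.2) + -(7 * a * b / 8) * p.2 ^ 3)) * (-p.2)
  + (p.2 + (-2 * b * (p.1 * p.2) + a * p.2 ^ 2)
      + (-(a * b / 8) * p.1 ^ 3 + -(21 * a * b / 8) * (p.1 * p.2 ^ 2)
          + (a ^ 2 - 2 * b ^ 2) * p.2 ^ 3))
    * (p.1 + p.2 * (p.1 ^ 2 + p.2 ^ 2 - 1) * (a * p.1 + b * p.2))

lemma abs_mul_le' {u v bu bv : ℝ} (hu : |u| ≤ bu) (hv : |v| ≤ bv) : |u * v| ≤ bu * bv := by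
  rw [abs_mul]
  exact mul_le_mul hu hv (abs_nonneg v) ((abs_nonneg u).trans hu)

lemma abs_pow_le' {x n : ℝ} (hx : |x| ≤ n) (k : ℕ) : |x ^ k| ≤ n ^ k := by
  rw [abs_pow]; exact pow_le_pow_left₀ (abs_nonneg x) hx k

set_option maxHeartbeats 1000000 in
/-- Key pointwise estimates: near the origin `kVdot ≤ -(ab/16)‖p‖⁴` and
`‖p‖²/4 ≤ kV p ≤ 2‖p‖²`. -/
lemma kukles_bounds (a b : ℝ) (hab : 0 < a * b) :
    ∃ ρ : ℝ, 0 < ρ ∧ ρ ≤ 1 ∧ ∀ p : ℝ × ℝ, ‖p‖ ≤ ρ →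
      kVdot a b p ≤ -(a * b / 16) * ‖p‖ ^ 4 ∧ ‖p‖ ^ 2 / 4 ≤ kV a b p ∧ kV a b p ≤ 2 * ‖p‖ ^ 2 := by
  obtain ⟨A, hA⟩ : ∃ A : ℝ, A = |a| := ⟨_, rfl⟩
  obtain ⟨B, hB⟩ : ∃ B : ℝ, B = |b| := ⟨_, rfl⟩
  have hA0 : 0 ≤ A := hA ▸ abs_nonneg a
  have hB0 : 0 ≤ B := hB ▸ abs_nonneg b
  obtain ⟨M, hM⟩ : ∃ M : ℝ, M = 4 * A * B + a ^ 2 + 2 * b ^ 2 := ⟨_, rfl⟩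
  have hM0 : 0 ≤ M := by rw [hM]; linarith only [sq_nonneg a, sq_nonneg b, mul_nonneg hA0 hB0]
  obtain ⟨K4, hK4⟩ : ∃ K : ℝ, K = 2 * (A + B) := ⟨_, rfl⟩
  have hK40 : 0 ≤ K4 := by rw [hK4]; linarith
  obtain ⟨C1, hC1⟩ : ∃ C1 : ℝ, C1 = A + 2 * B := ⟨_, rfl⟩
  have hC10 : 0 ≤ C1 := by rw [hC1]; linarith
  obtain ⟨C, hC⟩ : ∃ C : ℝ, C = K4 + C1 * K4 + M * (A + B) + M * K4 := ⟨_, rfl⟩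
  have hC0 : 0 ≤ C := by
    rw [hC]
    have h1 : 0 ≤ C1 * K4 := mul_nonneg hC10 hK40
    have h2 : 0 ≤ M * (A + B) := mul_nonneg hM0 (by linarith)
    have h3 : 0 ≤ M * K4 := mul_nonneg hM0 hK40
    linarith
  have hden1 : (0:ℝ) < 16 * (C + 1) := by linarith
  have hden2 : (0:ℝ) < 4 * (C1 + M + 1) := by linarith
  refine ⟨min 1 (min (a * b / (16 * (C + 1))) (1 / (4 * (C1 + M + 1)))), ?_, min_le_left _ _, ?_⟩
  · exact lt_min one_pos (lt_min (div_pos hab hden1) (div_pos one_pos hden2))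
  intro p hp
  obtain ⟨x, y⟩ := p
  obtain ⟨n, hn⟩ : ∃ n : ℝ, n = ‖((x, y) : ℝ × ℝ)‖ := ⟨_, rfl⟩
  rw [← hn] at hp
  have hn0 : 0 ≤ n := hn ▸ norm_nonneg _
  have hn1 : n ≤ 1 := hp.trans (min_le_left _ _)
  have hρ1 : n ≤ a * b / (16 * (C + 1)) := hp.trans ((min_le_right _ _).trans (min_le_left _ _))
  have hρ2 : n ≤ 1 / (4 * (C1 + M + 1)) := hp.trans ((min_le_right _ _).trans (min_le_right _ _))
  have hx : |x| ≤ n := by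
    rw [hn]; have := norm_fst_le ((x, y) : ℝ × ℝ); simpa [Real.norm_eq_abs] using this
  have hy : |y| ≤ n := by
    rw [hn]; have := norm_snd_le ((x, y) : ℝ × ℝ); simpa [Real.norm_eq_abs] using this
  have hx2 : x ^ 2 ≤ n ^ 2 := by
    calc x ^ 2 = |x| ^ 2 := (sq_abs x).symm
      _ ≤ n ^ 2 := pow_le_pow_left₀ (abs_nonneg x) hx 2
  have hy2 : y ^ 2 ≤ n ^ 2 := by
    calc y ^ 2 = |y| ^ 2 := (sq_abs y).symm
      _ ≤ n ^ 2 := pow_le_pow_left₀ (abs_nonneg y) hy 2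
  have hr2 : x ^ 2 + y ^ 2 ≤ 2 * n ^ 2 := by linarith
  have hn2 : n ^ 2 ≤ x ^ 2 + y ^ 2 := by
    have hchoice : n = |x| ∨ n = |y| := by
      rw [hn, Prod.norm_def]
      simp only [Real.norm_eq_abs]
      exact max_choice _ _
    rcases hchoice with h | h <;> rw [h, sq_abs] <;>
      [linarith [sq_nonneg y]; linarith [sq_nonneg x]]
  have hax : |a * x + b * y| ≤ (A + B) * n := by
    calc |a * x + b * y| ≤ |a * x| + |b * y| := abs_add_le _ _
      _ ≤ A * n + B * n := add_le_add (abs_mul_le' (hA ▸ le_rfl) hx) (abs_mul_le' (hB ▸ le_rfl) hy)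
      _ = (A + B) * n := by ring
  -- coefficient bounds
  have hABmul : |a * b| = A * B := by rw [hA, hB]; exact abs_mul a b
  have hc1 : |(-(2 * b / 3))| ≤ B := by
    rw [hB]; rcases abs_cases b with ⟨h1, h2⟩ | ⟨h1, h2⟩ <;>
      rcases abs_cases (-(2 * b / 3)) with ⟨h3, h4⟩ | ⟨h3, h4⟩ <;> linarith
  have hc2 : |(-b)| ≤ B := by rw [abs_neg, hB]
  have hc3 : |a / 3| ≤ A := by
    rw [hA]; rcases abs_cases a with ⟨h1, h2⟩ | ⟨h1, h2⟩ <;>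
      rcases abs_cases (a / 3) with ⟨h3, h4⟩ | ⟨h3, h4⟩ <;> linarith
  have hc4 : |(-(a * b / 8))| ≤ A * B := by
    rcases abs_cases (a * b) with ⟨h1, h2⟩ | ⟨h1, h2⟩ <;>
      rcases abs_cases (-(a * b / 8)) with ⟨h3, h4⟩ | ⟨h3, h4⟩ <;> rw [hABmul] at h1 <;> linarith
  have hc5 : |(-(21 * a * b / 8))| ≤ 3 * (A * B) := by
    rcases abs_cases (a * b) with ⟨h1, h2⟩ | ⟨h1, h2⟩ <;>
      rcases abs_cases (-(21 * a * b / 8)) with ⟨h3, h4⟩ | ⟨h3, h4⟩ <;> rw [hABmul] at h1 <;> linarith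
  have hc6 : |a ^ 2 - 2 * b ^ 2| ≤ a ^ 2 + 2 * b ^ 2 := by
    rcases abs_cases (a ^ 2 - 2 * b ^ 2) with ⟨h1, h2⟩ | ⟨h1, h2⟩ <;>
      linarith [sq_nonneg a, sq_nonneg b]
  have hc7 : |(-(7 * a * b / 8))| ≤ A * B := by
    rcases abs_cases (a * b) with ⟨h1, h2⟩ | ⟨h1, h2⟩ <;>
      rcases abs_cases (-(7 * a * b / 8)) with ⟨h3, h4⟩ | ⟨h3, h4⟩ <;> rw [hABmul] at h1 <;> linarith
  have hc8 : |(a ^ 2 - 2 * b ^ 2) / 4| ≤ a ^ 2 + 2 * b ^ 2 := by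
    rcases abs_cases (a ^ 2 - 2 * b ^ 2) with ⟨h1, h2⟩ | ⟨h1, h2⟩ <;>
      rcases abs_cases ((a ^ 2 - 2 * b ^ 2) / 4) with ⟨h3, h4⟩ | ⟨h3, h4⟩ <;>
      linarith [sq_nonneg a, sq_nonneg b]
  -- the pieces of the remainder
  obtain ⟨q2, hq2⟩ : ∃ q : ℝ, q = -(y * (a * x + b * y)) := ⟨_, rfl⟩
  obtain ⟨q4, hq4⟩ : ∃ q : ℝ, q = y * (x ^ 2 + y ^ 2) * (a * x + b * y) := ⟨_, rfl⟩
  obtain ⟨w3, hw3⟩ : ∃ w : ℝ, w = -(2 * b * (x * y)) + a * y ^ 2 := ⟨_, rfl⟩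
  obtain ⟨w4, hw4⟩ : ∃ w : ℝ, w = -(a * b / 8) * x ^ 3 + -(21 * a * b / 8) * (x * y ^ 2)
      + (a ^ 2 - 2 * b ^ 2) * y ^ 3 := ⟨_, rfl⟩
  have habr2 : |x ^ 2 + y ^ 2| ≤ 2 * n ^ 2 := by
    rw [abs_of_nonneg (by positivity)]; exact hr2
  have hQ4 : |q4| ≤ K4 * n ^ 4 := by
    rw [hq4]
    calc |y * (x ^ 2 + y ^ 2) * (a * x + b * y)| ≤ n * (2 * n ^ 2) * ((A + B) * n) :=
          abs_mul_le' (abs_mul_le' hy habr2) hax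
      _ = K4 * n ^ 4 := by rw [hK4]; ring
  have hQ2 : |q2| ≤ (A + B) * n ^ 2 := by
    rw [hq2, abs_neg]
    calc |y * (a * x + b * y)| ≤ n * ((A + B) * n) := abs_mul_le' hy hax
      _ = (A + B) * n ^ 2 := by ring
  have hc2' : |(-(2 * b))| ≤ 2 * B := by rw [abs_neg, hB, abs_mul]; norm_num
  have hW3 : |w3| ≤ C1 * n ^ 2 := by
    rw [hw3]
    calc |(-(2 * b * (x * y))) + a * y ^ 2| ≤ |(-(2 * b * (x * y)))| + |a * y ^ 2| := abs_add_le _ _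
      _ ≤ 2 * B * (n * n) + A * n ^ 2 := by
          refine add_le_add ?_ (abs_mul_le' (hA ▸ le_rfl) (abs_pow_le' hy 2))
          have e : -(2 * b * (x * y)) = -(2 * b) * (x * y) := by ring
          rw [e]
          exact abs_mul_le' hc2' (abs_mul_le' hx hy)
      _ ≤ C1 * n ^ 2 := by rw [hC1]; linarith only [sq_nonneg n]
  have hW4 : |w4| ≤ M * n ^ 3 := by
    rw [hw4]
    calc |(-(a * b / 8) * x ^ 3 + -(21 * a * b / 8) * (x * y ^ 2))
          + (a ^ 2 - 2 * b ^ 2) * y ^ 3|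
        ≤ (|(-(a * b / 8)) * x ^ 3| + |(-(21 * a * b / 8)) * (x * y ^ 2)|)
          + |(a ^ 2 - 2 * b ^ 2) * y ^ 3| :=
          (abs_add_le _ _).trans (add_le_add_left (abs_add_le _ _) _)
      _ ≤ (A * B * n ^ 3 + 3 * (A * B) * (n * n ^ 2)) + (a ^ 2 + 2 * b ^ 2) * n ^ 3 := by
          refine add_le_add (add_le_add ?_ ?_) ?_
          · exact abs_mul_le' hc4 (abs_pow_le' hx 3)
          · exact abs_mul_le' hc5 (abs_mul_le' hx (abs_pow_le' hy 2))
          · exact abs_mul_le' hc6 (abs_pow_le' hy 3)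
      _ ≤ M * n ^ 3 := by rw [hM]; linarith only [pow_nonneg hn0 3]
  obtain ⟨S, hS⟩ : ∃ S : ℝ, S = y * q4 + w3 * q4 + (w4 * q2 + w4 * q4) := ⟨_, rfl⟩
  -- the main identity
  have hid : kVdot a b ((x, y) : ℝ × ℝ) = -(a * b / 8) * (x ^ 2 + y ^ 2) ^ 2 + S := by
    rw [hS, hq2, hq4, hw3, hw4]; simp [kVdot]; ring
  have h65 : n ^ 6 ≤ n ^ 5 := pow_le_pow_of_le_one hn0 hn1 (by norm_num)
  have h75 : n ^ 7 ≤ n ^ 5 := pow_le_pow_of_le_one hn0 hn1 (by norm_num)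
  have hGbound : S ≤ C * n ^ 5 := by
    have habs : |S| ≤ n * (K4 * n ^ 4) + C1 * n ^ 2 * (K4 * n ^ 4)
        + (M * n ^ 3 * ((A + B) * n ^ 2) + M * n ^ 3 * (K4 * n ^ 4)) := by
      rw [hS]
      calc |y * q4 + w3 * q4 + (w4 * q2 + w4 * q4)|
          ≤ |y * q4 + w3 * q4| + |w4 * q2 + w4 * q4| := abs_add_le _ _
        _ ≤ (|y * q4| + |w3 * q4|) + (|w4 * q2| + |w4 * q4|) :=
            add_le_add (abs_add_le _ _) (abs_add_le _ _)
        _ ≤ _ := by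
            refine add_le_add (add_le_add ?_ ?_) (add_le_add ?_ ?_)
            · exact abs_mul_le' hy hQ4
            · exact abs_mul_le' hW3 hQ4
            · exact abs_mul_le' hW4 hQ2
            · exact abs_mul_le' hW4 hQ4
    refine (le_abs_self _).trans (habs.trans ?_)
    have e1 : C1 * K4 * n ^ 6 ≤ C1 * K4 * n ^ 5 :=
      mul_le_mul_of_nonneg_left h65 (mul_nonneg hC10 hK40)
    have e2 : M * K4 * n ^ 7 ≤ M * K4 * n ^ 5 :=
      mul_le_mul_of_nonneg_left h75 (mul_nonneg hM0 hK40)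
    rw [hC]
    linarith only [e1, e2]
  -- conclude the derivative bound
  have hn4r : n ^ 4 ≤ (x ^ 2 + y ^ 2) ^ 2 := by
    have h := mul_le_mul hn2 hn2 (sq_nonneg n) (by positivity : (0:ℝ) ≤ x ^ 2 + y ^ 2)
    linarith only [h]
  have hCn : C * n ≤ a * b / 16 := by
    calc C * n ≤ C * (a * b / (16 * (C + 1))) := mul_le_mul_of_nonneg_left hρ1 hC0
      _ = C * (a * b) / (16 * (C + 1)) := by rw [mul_div_assoc']
      _ ≤ a * b / 16 := by
          rw [div_le_div_iff₀ hden1 (by norm_num)]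
          linarith only [hab.le]
  have hCn5 : C * n ^ 5 ≤ a * b / 16 * n ^ 4 := by
    have h := mul_le_mul_of_nonneg_right hCn (pow_nonneg hn0 4)
    linarith only [h]
  have hVdot : kVdot a b ((x, y) : ℝ × ℝ) ≤ -(a * b / 16) * n ^ 4 := by
    rw [hid]
    have h8 : a * b / 8 * n ^ 4 ≤ a * b / 8 * (x ^ 2 + y ^ 2) ^ 2 :=
      mul_le_mul_of_nonneg_left hn4r (by linarith)
    linarith only [hGbound, hCn5, h8]
  -- the bounds on kV itself
  obtain ⟨s3, hs3⟩ : ∃ s : ℝ, s = -(2 * b / 3) * x ^ 3 + -b * (x * y ^ 2) + a / 3 * y ^ 3 :=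
    ⟨_, rfl⟩
  obtain ⟨s4, hs4⟩ : ∃ s : ℝ, s = -(a * b / 8) * (x ^ 3 * y) + -(7 * a * b / 8) * (x * y ^ 3)
      + (a ^ 2 - 2 * b ^ 2) / 4 * y ^ 4 := ⟨_, rfl⟩
  have hS3 : |s3| ≤ C1 * n ^ 3 := by
    rw [hs3]
    calc |(-(2 * b / 3) * x ^ 3 + -b * (x * y ^ 2)) + a / 3 * y ^ 3|
        ≤ (|(-(2 * b / 3)) * x ^ 3| + |(-b) * (x * y ^ 2)|) + |a / 3 * y ^ 3| :=
          (abs_add_le _ _).trans (add_le_add_left (abs_add_le _ _) _)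
      _ ≤ (B * n ^ 3 + B * (n * n ^ 2)) + A * n ^ 3 := by
          refine add_le_add (add_le_add ?_ ?_) ?_
          · exact abs_mul_le' hc1 (abs_pow_le' hx 3)
          · exact abs_mul_le' hc2 (abs_mul_le' hx (abs_pow_le' hy 2))
          · exact abs_mul_le' hc3 (abs_pow_le' hy 3)
      _ ≤ C1 * n ^ 3 := by rw [hC1]; linarith only [pow_nonneg hn0 3]
  have hS4 : |s4| ≤ M * n ^ 4 := by
    rw [hs4]
    calc |(-(a * b / 8) * (x ^ 3 * y) + -(7 * a * b / 8) * (x * y ^ 3))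
          + (a ^ 2 - 2 * b ^ 2) / 4 * y ^ 4|
        ≤ (|(-(a * b / 8)) * (x ^ 3 * y)| + |(-(7 * a * b / 8)) * (x * y ^ 3)|)
          + |(a ^ 2 - 2 * b ^ 2) / 4 * y ^ 4| :=
          (abs_add_le _ _).trans (add_le_add_left (abs_add_le _ _) _)
      _ ≤ (A * B * (n ^ 3 * n) + A * B * (n * n ^ 3)) + (a ^ 2 + 2 * b ^ 2) * n ^ 4 := by
          refine add_le_add (add_le_add ?_ ?_) ?_
          · exact abs_mul_le' hc4 (abs_mul_le' (abs_pow_le' hx 3) hy)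
          · exact abs_mul_le' hc7 (abs_mul_le' hx (abs_pow_le' hy 3))
          · exact abs_mul_le' hc8 (abs_pow_le' hy 4)
      _ ≤ M * n ^ 4 := by
          rw [hM]
          linarith only [mul_nonneg (mul_nonneg hA0 hB0) (pow_nonneg hn0 4)]
  have hVid : kV a b ((x, y) : ℝ × ℝ) = (x ^ 2 + y ^ 2) / 2 + s3 + s4 := by
    rw [hs3, hs4]; simp [kV]
  have h43 : n ^ 4 ≤ n ^ 3 := pow_le_pow_of_le_one hn0 hn1 (by norm_num)
  have hsmall : (C1 + M) * n ≤ 1 / 4 := by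
    calc (C1 + M) * n ≤ (C1 + M) * (1 / (4 * (C1 + M + 1))) :=
          mul_le_mul_of_nonneg_left hρ2 (by linarith)
      _ = (C1 + M) / (4 * (C1 + M + 1)) := by rw [mul_one_div]
      _ ≤ 1 / 4 := by
          rw [div_le_div_iff₀ hden2 (by norm_num)]
          linarith
  have hsmall' : C1 * n ^ 3 + M * n ^ 3 ≤ 1 / 4 * n ^ 2 := by
    have h := mul_le_mul_of_nonneg_right hsmall (sq_nonneg n)
    linarith only [h]
  have hMle : M * n ^ 4 ≤ M * n ^ 3 := mul_le_mul_of_nonneg_left h43 hM0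
  have hs3lb := neg_abs_le s3
  have hs4lb := neg_abs_le s4
  have hs3ub := le_abs_self s3
  have hs4ub := le_abs_self s4
  rw [← hn]
  refine ⟨hVdot, ?_, ?_⟩
  · rw [hVid]; linarith only [hS3, hS4, hn2, hsmall', hMle, hs3lb, hs4lb]
  · rw [hVid]; linarith only [hS3, hS4, hr2, hsmall', hMle, hs3ub, hs4ub, sq_nonneg n]

/-- Chain rule: along a solution of the Kukles system (with `c = 0`),
the Lyapunov function `kV` has derivative `kVdot`. -/
lemma kV_hasDerivAt (a b : ℝ) (γ : ℝ → ℝ × ℝ) (t : ℝ)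
    (h : HasDerivAt γ (kuklesField a b 0 (γ t)) t) :
    HasDerivAt (fun s => kV a b (γ s)) (kVdot a b (γ t)) t := by
  have hx : HasDerivAt (fun s => (γ s).1) (-(γ t).2) t := h.fst
  have hy : HasDerivAt (fun s => (γ s).2)
      ((γ t).1 + (γ t).2 * ((γ t).1 ^ 2 + (γ t).2 ^ 2 - 1) * (a * (γ t).1 + b * (γ t).2)) t := by
    have : HasDerivAt (fun s => (γ s).2) (kuklesField a b 0 (γ t)).2 t := h.snd
    simpa only [kuklesField, add_zero] using this
  have H := ((((hx.pow 2).add (hy.pow 2)).div_const 2).add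
      ((((hx.pow 3).const_mul (-(2 * b / 3))).add
        ((hx.mul (hy.pow 2)).const_mul (-b))).add
        ((hy.pow 3).const_mul (a / 3)))).add
    (((((hx.pow 3).mul hy).const_mul (-(a * b / 8))).add
        ((hx.mul (hy.pow 3)).const_mul (-(7 * a * b / 8)))).add
      ((hy.pow 4).const_mul ((a ^ 2 - 2 * b ^ 2) / 4)))
  have Hfun : HasDerivAt (fun s => kV a b (γ s)) _ t := H
  convert Hfun using 1
  simp only [kVdot, Pi.pow_apply, Pi.mul_apply]
  push_cast
  ring

/-- Main dynamical lemma: there is `ρ > 0` such that any solution starting in the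
ball of radius `ρ/3` stays bounded (quantitatively) and its norm tends to `0`. -/
lemma kukles_attract (a b : ℝ) (hab : 0 < a * b) :
    ∃ ρ > (0:ℝ), ∀ γ : ℝ → ℝ × ℝ,
      (∀ t : ℝ, 0 ≤ t → HasDerivAt γ (kuklesField a b 0 (γ t)) t) →
      ‖γ 0‖ < ρ / 3 →
      (∀ t : ℝ, 0 ≤ t → ‖γ t‖ ^ 2 ≤ 8 * ‖γ 0‖ ^ 2 ∧ ‖γ t‖ < ρ) ∧
      Filter.Tendsto (fun t => ‖γ t‖) Filter.atTop (nhds 0) := by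
  obtain ⟨ρ, hρ0, hρ1, hbound⟩ := kukles_bounds a b hab
  refine ⟨ρ, hρ0, ?_⟩
  intro γ hγ hγ0
  have hWd : ∀ t : ℝ, 0 ≤ t → HasDerivAt (fun s => kV a b (γ s)) (kVdot a b (γ t)) t :=
    fun t ht => kV_hasDerivAt a b γ t (hγ t ht)
  have hcont : ∀ s : ℝ, 0 ≤ s → ContinuousAt γ s := fun s hs => (hγ s hs).continuousAt
  have hγ0ρ : ‖γ 0‖ ≤ ρ := by linarith
  have hW0ub : kV a b (γ 0) ≤ 2 * ‖γ 0‖ ^ 2 := (hbound _ hγ0ρ).2.2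
  have hW00 : 0 ≤ kV a b (γ 0) :=
    le_trans (by positivity) ((hbound _ hγ0ρ).2.1)
  -- Invariance: the solution never leaves the ball of radius ρ.
  have inv : ∀ t : ℝ, 0 ≤ t → ‖γ t‖ < ρ := by
    intro t ht
    by_contra hcon
    push_neg at hcon
    have hne : ({s : ℝ | 0 ≤ s ∧ ρ ≤ ‖γ s‖}).Nonempty := ⟨t, ht, hcon⟩
    have hbdd : BddBelow {s : ℝ | 0 ≤ s ∧ ρ ≤ ‖γ s‖} := ⟨0, fun s hs => hs.1⟩
    set t1 := sInf {s : ℝ | 0 ≤ s ∧ ρ ≤ ‖γ s‖} with ht1def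
    have ht10 : 0 ≤ t1 := le_csInf hne (fun s hs => hs.1)
    have ht1cl : t1 ∈ closure {s : ℝ | 0 ≤ s ∧ ρ ≤ ‖γ s‖} := csInf_mem_closure hne hbdd
    have hnb : (nhdsWithin t1 {s : ℝ | 0 ≤ s ∧ ρ ≤ ‖γ s‖}).NeBot :=
      mem_closure_iff_nhdsWithin_neBot.mp ht1cl
    have htendS : Filter.Tendsto (fun s => ‖γ s‖)
        (nhdsWithin t1 {s : ℝ | 0 ≤ s ∧ ρ ≤ ‖γ s‖}) (nhds ‖γ t1‖) :=
      ((hcont t1 ht10).norm.tendsto).mono_left nhdsWithin_le_nhds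
    have ht1ge : ρ ≤ ‖γ t1‖ :=
      ge_of_tendsto htendS (eventually_mem_nhdsWithin.mono fun s hs => hs.2)
    have ht1pos : 0 < t1 := by
      rcases ht10.lt_or_eq with h | h
      · exact h
      · exfalso; rw [← h] at ht1ge; linarith
    have hlt : ∀ s : ℝ, 0 ≤ s → s < t1 → ‖γ s‖ < ρ := by
      intro s hs0 hst
      by_contra hcon2
      push_neg at hcon2
      exact absurd (csInf_le hbdd ⟨hs0, hcon2⟩) (not_le.mpr hst)
    have ht1le : ‖γ t1‖ ≤ ρ := by
      have htend2 : Filter.Tendsto (fun s => ‖γ s‖) (nhdsWithin t1 (Iio t1)) (nhds ‖γ t1‖) :=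
        ((hcont t1 ht10).norm.tendsto).mono_left nhdsWithin_le_nhds
      refine le_of_tendsto htend2 ?_
      have h1 : Ioi (0:ℝ) ∈ nhdsWithin t1 (Iio t1) :=
        mem_nhdsWithin_of_mem_nhds (Ioi_mem_nhds ht1pos)
      have h2 : Iio t1 ∈ nhdsWithin t1 (Iio t1) := self_mem_nhdsWithin
      filter_upwards [h1, h2] with s hs1 hs2
      exact (hlt s (le_of_lt hs1) hs2).le
    have hsle : ∀ s ∈ Icc (0:ℝ) t1, ‖γ s‖ ≤ ρ := by
      intro s hs
      rcases lt_or_eq_of_le hs.2 with h | h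
      · exact (hlt s hs.1 h).le
      · rw [h]; exact ht1le
    have hAnti : AntitoneOn (fun s => kV a b (γ s)) (Icc 0 t1) := by
      apply antitoneOn_of_deriv_nonpos (convex_Icc 0 t1)
      · intro s hs
        exact ((hWd s hs.1).continuousAt).continuousWithinAt
      · intro s hs
        rw [interior_Icc] at hs
        exact ((hWd s hs.1.le).differentiableAt).differentiableWithinAt
      · intro s hs
        rw [interior_Icc] at hs
        rw [(hWd s hs.1.le).deriv]
        have hb := (hbound _ (hsle s ⟨hs.1.le, hs.2.le⟩)).1
        have h5 : 0 ≤ a * b / 16 * ‖γ s‖ ^ 4 :=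
          mul_nonneg (by linarith) (by positivity)
        linarith only [hb, h5]
    have hcontr1 : kV a b (γ t1) ≤ kV a b (γ 0) :=
      hAnti ⟨le_rfl, ht10⟩ ⟨ht10, le_rfl⟩ ht10
    have hlow : ρ ^ 2 / 4 ≤ kV a b (γ t1) := by
      have h := (hbound _ ht1le).2.1
      have h2 : ρ ^ 2 ≤ ‖γ t1‖ ^ 2 := pow_le_pow_left₀ hρ0.le ht1ge 2
      linarith
    have hstrict : ‖γ 0‖ ^ 2 < (ρ / 3) ^ 2 :=
      pow_lt_pow_left₀ hγ0 (norm_nonneg _) (two_ne_zero)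
    have hρsq : 0 < ρ ^ 2 := by positivity
    linarith only [hW0ub, hcontr1, hlow, hstrict, hρsq]
  -- Global monotonicity of the Lyapunov function along the solution.
  have hAnti : AntitoneOn (fun s => kV a b (γ s)) (Ici 0) := by
    apply antitoneOn_of_deriv_nonpos (convex_Ici 0)
    · intro s hs
      exact ((hWd s hs).continuousAt).continuousWithinAt
    · intro s hs
      rw [interior_Ici] at hs
      exact ((hWd s hs.le).differentiableAt).differentiableWithinAt
    · intro s hs
      rw [interior_Ici] at hs
      rw [(hWd s hs.le).deriv]
      have hb := (hbound _ (inv s hs.le).le).1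
      have h5 : 0 ≤ a * b / 16 * ‖γ s‖ ^ 4 := mul_nonneg (by linarith) (by positivity)
      linarith only [hb, h5]
  constructor
  · intro t ht
    refine ⟨?_, inv t ht⟩
    have h1 : kV a b (γ t) ≤ kV a b (γ 0) := hAnti (mem_Ici.mpr le_rfl) (mem_Ici.mpr ht) ht
    have h2 := (hbound _ (inv t ht).le).2.1
    linarith [hW0ub]
  -- Attraction.
  · rw [Metric.tendsto_atTop]
    intro ε hε
    have hε' : 0 < min ε ρ := lt_min hε hρ0
    have hm : 0 < (min ε ρ) ^ 2 / 8 := by positivity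
    have key : ∃ t0 : ℝ, 0 ≤ t0 ∧ kV a b (γ t0) < (min ε ρ) ^ 2 / 8 := by
      by_contra hcon
      push_neg at hcon
      obtain ⟨K, hKdef⟩ : ∃ K : ℝ, K = a * b / 16 * ((min ε ρ) ^ 2 / 16) ^ 2 := ⟨_, rfl⟩
      have hK : 0 < K := by
        rw [hKdef]
        exact mul_pos (by linarith) (pow_pos (by positivity) 2)
      have hg : AntitoneOn (fun s => kV a b (γ s) + K * s) (Ici 0) := by
        apply antitoneOn_of_deriv_nonpos (convex_Ici 0)
        · intro s hs
          have : HasDerivAt (fun s => kV a b (γ s) + K * s) (kVdot a b (γ s) + K * 1) s :=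
            (hWd s hs).add ((hasDerivAt_id s).const_mul K)
          exact this.continuousAt.continuousWithinAt
        · intro s hs
          rw [interior_Ici] at hs
          have : HasDerivAt (fun s => kV a b (γ s) + K * s) (kVdot a b (γ s) + K * 1) s :=
            (hWd s hs.le).add ((hasDerivAt_id s).const_mul K)
          exact this.differentiableAt.differentiableWithinAt
        · intro s hs
          rw [interior_Ici] at hs
          have hD : HasDerivAt (fun s => kV a b (γ s) + K * s) (kVdot a b (γ s) + K * 1) s :=
            (hWd s hs.le).add ((hasDerivAt_id s).const_mul K)
          rw [hD.deriv]
          have hsρ := (inv s hs.le).le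
          have hb := (hbound _ hsρ).1
          have hup := (hbound _ hsρ).2.2
          have hWlb := hcon s hs.le
          have h2 : (min ε ρ) ^ 2 / 16 ≤ ‖γ s‖ ^ 2 := by linarith
          have h4 : ((min ε ρ) ^ 2 / 16) ^ 2 ≤ (‖γ s‖ ^ 2) ^ 2 :=
            pow_le_pow_left₀ (by positivity) h2 2
          have h6 : a * b / 16 * ((min ε ρ) ^ 2 / 16) ^ 2 ≤ a * b / 16 * (‖γ s‖ ^ 2) ^ 2 :=
            mul_le_mul_of_nonneg_left h4 (by linarith)
          rw [hKdef]
          linarith only [hb, h6]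
      obtain ⟨T, hTdef⟩ : ∃ T : ℝ, T = kV a b (γ 0) / K + 1 := ⟨_, rfl⟩
      have hT0 : 0 ≤ T := by
        have : 0 ≤ kV a b (γ 0) / K := div_nonneg hW00 hK.le
        rw [hTdef]; linarith
      have hgT : kV a b (γ T) + K * T ≤ kV a b (γ 0) + K * 0 :=
        hg (mem_Ici.mpr le_rfl) (mem_Ici.mpr hT0) hT0
      have hKT : K * T = kV a b (γ 0) + K := by
        rw [hTdef]; field_simp
      have hWT := hcon T hT0
      linarith only [hgT, hKT, hWT, hm, hK]
    obtain ⟨t0, ht0, hWt0⟩ := key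
    refine ⟨t0, fun s hs => ?_⟩
    have hs0 : 0 ≤ s := ht0.trans hs
    have hWs : kV a b (γ s) ≤ kV a b (γ t0) :=
      hAnti (mem_Ici.mpr ht0) (mem_Ici.mpr hs0) hs
    have h2 := (hbound _ (inv s hs0).le).2.1
    have hlt2 : ‖γ s‖ ^ 2 < (min ε ρ) ^ 2 := by
      linarith only [h2, hWs, hWt0, sq_nonneg (min ε ρ)]
    have hlt3 : ‖γ s‖ < min ε ρ := lt_of_pow_lt_pow_left₀ 2 hε'.le hlt2
    rw [Real.dist_eq, sub_zero, abs_of_nonneg (norm_nonneg _)]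
    exact hlt3.trans_le (min_le_left _ _)

/-- If `c = 0` and `a·b > 0`, the origin is an attracting
(asymptotically stable) equilibrium of the Kukles system: it is Lyapunov stable,
and there is `δ > 0` such that every solution defined for all `t ≥ 0` with
`‖γ(0)‖ < δ` satisfies `γ(t) → (0,0)` as `t → +∞`. -/
theorem kukles_origin_attracting (a b c : ℝ) (hc : c = 0) (hab : 0 < a * b) :
    (∀ ε > (0:ℝ), ∃ δ > (0:ℝ), ∀ γ : ℝ → ℝ × ℝ,
        (∀ t : ℝ, 0 ≤ t → HasDerivAt γ (kuklesField a b c (γ t)) t) →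
        ‖γ 0‖ < δ → ∀ t : ℝ, 0 ≤ t → ‖γ t‖ < ε) ∧
    (∃ δ > (0:ℝ), ∀ γ : ℝ → ℝ × ℝ,
        (∀ t : ℝ, 0 ≤ t → HasDerivAt γ (kuklesField a b c (γ t)) t) →
        ‖γ 0‖ < δ →
        Filter.Tendsto γ Filter.atTop (nhds ((0:ℝ), (0:ℝ)))) := by
  subst hc
  obtain ⟨ρ, hρ0, hmain⟩ := kukles_attract a b hab
  constructor
  · intro ε hε
    refine ⟨min (ρ / 3) (ε / 3), lt_min (by linarith) (by linarith), ?_⟩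
    intro γ hγ hγ0 t ht
    have hγ0' : ‖γ 0‖ < ρ / 3 := lt_of_lt_of_le hγ0 (min_le_left _ _)
    obtain ⟨hq, -⟩ := hmain γ hγ hγ0'
    have h1 := (hq t ht).1
    have h3 : ‖γ 0‖ < ε / 3 := lt_of_lt_of_le hγ0 (min_le_right _ _)
    have h4 : ‖γ 0‖ ^ 2 < (ε / 3) ^ 2 := pow_lt_pow_left₀ h3 (norm_nonneg _) two_ne_zero
    have h5 : ‖γ t‖ ^ 2 < ε ^ 2 := by nlinarith [sq_nonneg ε]
    exact lt_of_pow_lt_pow_left₀ 2 hε.le h5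
  · refine ⟨ρ / 3, by linarith, ?_⟩
    intro γ hγ hγ0
    obtain ⟨-, htend⟩ := hmain γ hγ hγ0
    exact tendsto_zero_iff_norm_tendsto_zero.mpr htend
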